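/- arXiv:1903.03766 — 4 statements merged into one kernel-verified Lean document; each statement's English description precedes it below -/
import Mathlib

section
/- Let $p$ be an odd prime. Then $\sum_{k=0}^{(p+1)/2} (4k-1)^3 \frac{(-\frac{1}{2})_k^4}{k!^4} \equiv 0 \pmod{p^4}$, in the sense that the $p$-adic valuation of this rational number is at least $4$. -/
open Finset

/-- Pochhammer symbol `(a)_k = a(a+1)⋯(a+k-1)` for a rational `a`. -/
def poch (a : ℚ) (k : ℕ) : ℚ := ∏ i ∈ Finset.range k, (a + i)

/-- Euler numbers, defined by `∑ E_n x^n/n! = 2e^x/(e^{2x}+1) = sech x`. -/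
def eulerNumber : ℕ → ℤ
  | 0 => 1
  | n + 1 =>
    -∑ k ∈ (Finset.range (n + 1)).attach,
      if Even (n + 1 - k.1) then ((n + 1).choose k.1 : ℤ) * eulerNumber k.1 else 0
  decreasing_by exact Finset.mem_range.mp k.2

/-- `x ≡ y (mod p^m)` for rationals: `v_p(x - y) ≥ m` (with `x = y` allowed). -/
def ratCongr (p m : ℕ) (x y : ℚ) : Prop :=
  x = y ∨ (m : ℤ) ≤ padicValRat p (x - y)

lemma poch_succ (a : ℚ) (n : ℕ) : poch a (n+1) = poch a n * (a + n) := by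
  simp [poch, Finset.prod_range_succ]

lemma key (n : ℕ) : ∑ k ∈ Finset.range (n+1),
    (4 * k - 1 : ℚ) ^ 3 * poch (-(1/2)) k ^ 4 / (k.factorial : ℚ) ^ 4
    = poch (-(1/2)) n ^ 4 * (2*n-1 : ℚ)^4 * (8*(n:ℚ)^2+4*n-1) / (n.factorial : ℚ) ^ 4 := by
  induction n with
  | zero => simp [poch]; norm_num
  | succ n ih =>
    rw [Finset.sum_range_succ, ih, poch_succ]
    have hf : (n.factorial : ℚ) ≠ 0 := by positivity
    have hn1 : ((n:ℚ)+1) ≠ 0 := by positivity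
    rw [Nat.factorial_succ]
    push_cast
    field_simp
    ring

lemma factor_ne (i : ℕ) : (-(1/2 : ℚ) + i) ≠ 0 := by
  intro h
  have : (i : ℚ) = 1/2 := by linarith
  rcases i with _ | j
  · norm_num at this
  · push_cast at this; norm_num at this; linarith [Nat.cast_nonneg (α := ℚ) j]

lemma poch_ne (n : ℕ) : poch (-(1/2)) n ≠ 0 := by
  induction n with
  | zero => simp [poch]
  | succ n ih => rw [poch_succ]; exact mul_ne_zero ih (factor_ne n)

lemma val_factor (p : ℕ) (hp : p.Prime) (hodd : Odd p) (i : ℕ) (hi : 2*i < p) :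
    padicValRat p (-(1/2 : ℚ) + i) = 0 := by
  haveI := Fact.mk hp
  have h2 : padicValRat p 2 = 0 := by
    have : ¬ p ∣ 2 := by
      intro h
      have h2 := Nat.le_of_dvd (by norm_num) h
      have := hp.two_le
      rcases hodd with ⟨m, hm⟩; omega
    rw [show (2:ℚ) = ((2:ℕ):ℚ) by norm_num, padicValRat.of_nat]
    exact_mod_cast padicValNat.eq_zero_of_not_dvd this
  have heq : (-(1/2 : ℚ) + i) = ((2*(i:ℤ)-1 : ℤ) : ℚ) / 2 := by push_cast; ring
  have hz : ((2*(i:ℤ)-1 : ℤ) : ℚ) ≠ 0 := by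
    intro h
    have : (2*(i:ℤ)-1) = 0 := by exact_mod_cast h
    omega
  rw [heq, padicValRat.div hz (by norm_num), h2, sub_zero, padicValRat.of_int]
  have : ¬ (p:ℤ) ∣ (2*(i:ℤ)-1) := by
    intro h
    rcases i with _ | j
    · simp at h
      have := Int.le_of_dvd (by norm_num) h
      have := hp.two_le
      omega
    · have h1 : (0:ℤ) < 2*((j:ℤ)+1)-1 := by omega
      have := Int.le_of_dvd (by push_cast; omega) h
      push_cast at this ⊢
      omega
  exact_mod_cast padicValInt.eq_zero_of_not_dvd this

lemma val_poch (p : ℕ) (hp : p.Prime) (hodd : Odd p) (n : ℕ) (hn : 2*n ≤ p+1) :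
    padicValRat p (poch (-(1/2)) n) = 0 := by
  haveI := Fact.mk hp
  induction n with
  | zero => simp [poch]
  | succ n ih =>
    rw [poch_succ, padicValRat.mul (poch_ne n) (factor_ne n),
      ih (by omega), val_factor p hp hodd n (by rcases hodd with ⟨m, hm⟩; omega)]
    norm_num

theorem stmt2 (p : ℕ) (hp : p.Prime) (hodd : Odd p) :
    ratCongr p 4
      (∑ k ∈ Finset.range ((p + 1) / 2 + 1),
        (4 * k - 1 : ℚ) ^ 3 * poch (-(1/2)) k ^ 4 / (k.factorial : ℚ) ^ 4)
      0 := by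
  haveI := Fact.mk hp
  obtain ⟨m, hm⟩ := hodd
  have hm1 : 1 ≤ m := by
    have := hp.two_le; omega
  set n : ℕ := (p + 1) / 2 with hndef
  have hn : n = m + 1 := by omega
  right
  rw [sub_zero, key]
  -- rewrite pieces
  have hP := poch_ne n
  have hQ : (2*(n:ℚ)-1) = (p:ℚ) := by
    rw [hn]; push_cast; rw [hm]; push_cast; ring
  have hQne : (p:ℚ) ≠ 0 := by
    have := hp.two_le
    positivity
  have hCeq : (8*(n:ℚ)^2+4*(n:ℚ)-1) = ((8*(n:ℤ)^2+4*(n:ℤ)-1 : ℤ) : ℚ) := by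
    push_cast; ring
  have hCne : ((8*(n:ℤ)^2+4*(n:ℤ)-1 : ℤ) : ℚ) ≠ 0 := by
    intro h
    have h' : (8*(n:ℤ)^2+4*(n:ℤ)-1) = 0 := by exact_mod_cast h
    nlinarith [sq_nonneg ((n:ℤ))]
  have hFne : ((n.factorial : ℚ)) ≠ 0 := by positivity
  rw [hQ, hCeq]
  have hvP : padicValRat p (poch (-(1/2)) n) = 0 :=
    val_poch p hp ⟨m, hm⟩ n (by omega)
  have hvF : padicValRat p ((n.factorial : ℚ)) = 0 := by
    rw [padicValRat.of_nat]
    have : ¬ p ∣ n.factorial := by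
      intro h
      have := (Nat.Prime.dvd_factorial hp).mp h
      omega
    exact_mod_cast padicValNat.eq_zero_of_not_dvd this
  rw [padicValRat.div (by positivity) (by positivity),
    padicValRat.mul (by positivity) hCne,
    padicValRat.mul (by positivity) (by positivity),
    padicValRat.pow (poch (-(1/2)) n), padicValRat.pow (p:ℚ), padicValRat.pow (n.factorial : ℚ),
    hvP, hvF, padicValRat.self hp.one_lt, padicValRat.of_int]
  have := Int.natCast_nonneg (padicValInt p (8*(n:ℤ)^2+4*(n:ℤ)-1))
  push_cast
  linarith
end

section
/- Let $p$ be an odd prime and let $1 \le k \le (p-1)/2$. Then $(-1)^{(p+1)/2+k} \cdot \frac{2\,(\frac{1}{2})_{(p+1)/2}^2\,(\frac{1}{2})_{(p-1)/2+k}}{(1)_{(p-1)/2}^2\,(1)_{(p+1)/2-k}\,(\frac{1}{2})_k^2} \equiv \frac{p^3\, 4^k}{2k(2k-1)\binom{2k}{k}} \pmod{p^4}$, the congruence being between $p$-integral rationals. -/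
open Finset

lemma prod_range_add_one (m : ℕ) : ∏ j ∈ range m, (j+1) = m.factorial := by
  induction m with
  | zero => simp
  | succ m ih => rw [prod_range_succ, ih, Nat.factorial_succ]; ring

lemma prod_range_sub (n : ℕ) : ∏ j ∈ range n, (n - j) = n.factorial := by
  rw [← prod_range_add_one n, ← Finset.prod_range_reflect]
  apply Finset.prod_congr rfl
  intro j hj; simp at hj; omega

lemma fact_add_prod (a b : ℕ) : (a + b).factorial = a.factorial * ∏ j ∈ range b, (a+1+j) := by
  induction b with
  | zero => simp
  | succ b ih => rw [prod_range_succ, ← mul_assoc, ← ih, ← Nat.add_assoc, Nat.factorial_succ]; ring_nf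

lemma fact_sub_prod (n k : ℕ) (h : k ≤ n + 1) :
    (n+1).factorial = (n+1-k).factorial * ∏ j ∈ range k, (n+1-j) := by
  induction k with
  | zero => simp
  | succ k ih =>
      have hk : k ≤ n + 1 := by omega
      have h1 : (n+1-k).factorial = (n+1-(k+1)).factorial * (n+1-k) := by
        have h2 : n+1-k = (n+1-(k+1))+1 := by omega
        rw [h2, Nat.factorial_succ]; ring
      rw [prod_range_succ, ih hk, h1]; ring

lemma two_mul_fact (k : ℕ) : (2*k).factorial = 2^k * k.factorial * ∏ j ∈ range k, (2*j+1) := by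
  induction k with
  | zero => simp
  | succ k ih =>
      have h : 2*(k+1) = (2*k+1)+1 := by ring
      rw [h, prod_range_succ]
      simp only [Nat.factorial_succ]
      rw [ih]; ring


lemma alg_key {F : Type*} [Field F] (a b c d e f g Pc Fk s u v kk : F)
    (ha : a ≠ 0) (hd : d ≠ 0) (hs : s ≠ 0) (hkk : kk ≠ 0) (h2 : (2:F) ≠ 0)
    (hu : u^2 = 1) (hv : v^2 = 1)
    (r1 : a^2 * u = -1)
    (r2 : s * f = a * c)
    (r3 : s * g = e * (v * d))
    (r4 : 2 * g = a)
    (r5 : Fk = s * b * c)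
    (r6 : kk * Pc = Fk)
    (r7 : c = d * (kk - 1)) :
    (u * v) * 2 * (1 * -1)^2 * (-1 * Pc) * s^4 * b^2 * (kk * (kk - 1) * Fk)
      = s^2 * b^2 * ((16 * s^2) * g^2 * f * a^2 * e * Fk^2) := by
  have ha2 : a^2 = -u := by linear_combination u*r1 - a^2*hu
  have ha6 : a^6 = -u := by linear_combination (a^4 - a^2*u + u^2)*ha2 - u*hu
  have hg : g = a / 2 := by rw [eq_div_iff h2]; linear_combination r4
  have hf : f = a * c / s := by rw [eq_div_iff hs]; linear_combination r2
  have he : e = s * g * v / d := by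
    rw [eq_div_iff hd]; linear_combination -v * r3 - e*d*hv
  have hPc : Pc = Fk / kk := by rw [eq_div_iff hkk]; linear_combination r6
  subst he hf hPc r5 r7 hg
  field_simp
  ring_nf
  linear_combination (v*s^7*b^4*d^3*(16*kk - 48*kk^2 + 48*kk^3 - 16*kk^4)
      + v*s^6*b^4*d^3*128*(1-kk) + v*s^6*b^4*d^3*128*(kk-1)
      + v*b^4*(16 - 48*kk + 48*kk^2 - 16*kk^3 + s^7*d^3*(-16*kk+48*kk^2-48*kk^3+16*kk^4)))*ha6
    + (u*v*s^6*b^4*d^3*128*(1-kk) + u*v*s^6*b^4*d^3*128*(kk-1))*hu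

lemma zmod_key (p n k m : ℕ) (hp : p.Prime) (hpn : p = 2*n+1) (hkm : k = m+1)
    (hkn : k ≤ n) :
    (p:ℤ) ∣
      (((-1)^(n+1+k) * 2 * ((2*(n:ℤ)+2) * ((2*n).factorial : ℤ))^2 *
          (((2*n).factorial : ℤ) * ((∏ j ∈ Finset.range (2*k-1), (2*n+2+j) : ℕ) : ℤ)) *
          4^(2*k) * ((k.factorial : ℤ))^2) *
        ((2*(k:ℤ)) * (2*(k:ℤ)-1) * ((2*k).factorial : ℤ))
      - (4^k * ((k.factorial : ℤ))^2) *
        (4^(3*n+2+k) * (((n+1).factorial : ℤ))^2 * ((n+k).factorial : ℤ) *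
          ((n.factorial : ℤ))^2 * ((n+1-k).factorial : ℤ) * (((2*k).factorial : ℤ))^2)) := by
  haveI : Fact p.Prime := ⟨hp⟩
  subst hkm
  rw [← ZMod.intCast_zmod_eq_zero_iff_dvd]
  -- basic cast helpers
  have key1 : ∀ a b : ℕ, a = p + b → ((a : ℕ) : ZMod p) = ((b : ℕ) : ZMod p) := by
    intro a b h; subst h; push_cast [ZMod.natCast_self]; ring
  have key2 : ∀ a b : ℕ, a + b = p → ((a : ℕ) : ZMod p) = -((b : ℕ) : ZMod p) := by
    intro a b h
    have h2 : ((a + b : ℕ) : ZMod p) = 0 := by rw [h, ZMod.natCast_self]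
    push_cast at h2; linear_combination h2
  have hndvd : ∀ a : ℕ, 0 < a → a < p → ((a : ℕ) : ZMod p) ≠ 0 := by
    intro a h1 h2 h
    rw [ZMod.natCast_eq_zero_iff] at h
    exact absurd (Nat.le_of_dvd h1 h) (by omega)
  have hfne : ∀ a : ℕ, a < p → ((a.factorial : ℕ) : ZMod p) ≠ 0 := by
    intro a h2 h
    rw [ZMod.natCast_eq_zero_iff, hp.dvd_factorial] at h
    omega
  have h2ne : (2:ZMod p) ≠ 0 := by
    have := hndvd 2 (by norm_num) (by omega)
    simpa using this
  -- Wilson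
  have hW : (((2*n).factorial : ℕ) : ZMod p) = -1 := by
    have w := ZMod.wilsons_lemma (p := p)
    rwa [show p - 1 = 2*n from by omega] at w
  -- nonzero facts
  have hOd_ne : ∀ l : ℕ, l ≤ n → ((∏ j ∈ range l, (2*j+1) : ℕ) : ZMod p) ≠ 0 := by
    intro l hl
    rw [Nat.cast_prod]
    refine Finset.prod_ne_zero_iff.mpr ?_
    intro j hj; simp only [mem_range] at hj
    exact hndvd (2*j+1) (by omega) (by omega)
  have ha_ne : ((n.factorial : ℕ) : ZMod p) ≠ 0 := hfne n (by omega)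
  have hs_ne : ((2:ZMod p))^(m+1) ≠ 0 := pow_ne_zero _ h2ne
  have hkk_ne : (2*((m:ZMod p)+1)) ≠ 0 := by
    intro h
    apply hndvd (2*(m+1)) (by omega) (by omega)
    push_cast
    linear_combination h
  -- r1 : Wilson square
  have hr1 : (((n.factorial : ℕ) : ZMod p))^2 * (-1)^n = -1 := by
    have h2 : (2*n).factorial = n.factorial * ∏ j ∈ range n, (n+1+j) := by
      rw [show 2*n = n+n from by ring]; exact fact_add_prod n n
    have h3 : ((∏ j ∈ range n, (n+1+j) : ℕ) : ZMod p)
        = (-1)^n * ((n.factorial : ℕ) : ZMod p) := by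
      rw [Nat.cast_prod]
      have hc : ∀ j ∈ range n, ((n+1+j : ℕ) : ZMod p) = (-1) * ((n - j : ℕ) : ZMod p) := by
        intro j hj; simp only [mem_range] at hj
        rw [key2 (n+1+j) (n-j) (by omega)]; ring
      rw [Finset.prod_congr rfl hc, Finset.prod_mul_distrib, prod_const, card_range,
        ← Nat.cast_prod, prod_range_sub]
    have h4 : (((2*n).factorial : ℕ) : ZMod p)
        = ((n.factorial : ℕ) : ZMod p) * ((-1)^n * ((n.factorial : ℕ) : ZMod p)) := by
      rw [h2, Nat.cast_mul, h3]
    rw [hW] at h4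
    linear_combination -h4
  -- r2
  have hr2 : (2:ZMod p)^(m+1) * (((n+(m+1)).factorial : ℕ) : ZMod p)
      = ((n.factorial : ℕ) : ZMod p) * ((∏ j ∈ range (m+1), (2*j+1) : ℕ) : ZMod p) := by
    rw [fact_add_prod n (m+1), Nat.cast_mul, Nat.cast_prod, Nat.cast_prod]
    have hdist : (∏ _j ∈ range (m+1), (2:ZMod p)) * ∏ j ∈ range (m+1), ((n+1+j : ℕ) : ZMod p)
        = ∏ j ∈ range (m+1), ((2*j+1 : ℕ) : ZMod p) := by
      rw [← Finset.prod_mul_distrib]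
      apply Finset.prod_congr rfl
      intro j hj; simp only [mem_range] at hj
      have h5 : ((2*(n+1+j) : ℕ) : ZMod p) = ((2*j+1 : ℕ) : ZMod p) := key1 _ _ (by omega)
      calc (2:ZMod p) * ((n+1+j : ℕ) : ZMod p) = ((2*(n+1+j) : ℕ) : ZMod p) := by
            push_cast; ring
        _ = _ := h5
    calc (2:ZMod p)^(m+1) * (((n.factorial : ℕ) : ZMod p) * ∏ j ∈ range (m+1), ((n+1+j : ℕ) : ZMod p))
        = ((n.factorial : ℕ) : ZMod p) * ((∏ _j ∈ range (m+1), (2:ZMod p)) * ∏ j ∈ range (m+1), ((n+1+j : ℕ) : ZMod p)) := by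
          rw [prod_const, card_range]; ring
      _ = _ := by rw [hdist]
  -- r3
  have hr3 : (2:ZMod p)^(m+1) * (((n+1).factorial : ℕ) : ZMod p)
      = (((n-m).factorial : ℕ) : ZMod p) *
        ((-1)^m * ((∏ j ∈ range m, (2*j+1) : ℕ) : ZMod p)) := by
    have h1 := fact_sub_prod n (m+1) (by omega)
    rw [show n+1-(m+1) = n - m from by omega] at h1
    rw [h1, Nat.cast_mul, Nat.cast_prod]
    have hs : (2:ZMod p)^(m+1) * ∏ j ∈ range (m+1), ((n+1-j : ℕ) : ZMod p)
        = (-1)^m * ((∏ j ∈ range m, (2*j+1) : ℕ) : ZMod p) := by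
      have hdist : (2:ZMod p)^(m+1) * ∏ j ∈ range (m+1), ((n+1-j : ℕ) : ZMod p)
          = ∏ j ∈ range (m+1), ((2*(n+1-j) : ℕ) : ZMod p) := by
        rw [show (2:ZMod p)^(m+1) = ∏ _j ∈ range (m+1), (2:ZMod p) from by
          rw [prod_const, card_range], ← Finset.prod_mul_distrib]
        apply Finset.prod_congr rfl
        intro j hj
        rw [Nat.cast_mul]; push_cast; ring
      rw [hdist, Finset.prod_range_succ']
      have h0 : ((2*(n+1-0) : ℕ) : ZMod p) = 1 := by
        have := key1 (2*(n+1-0)) 1 (by omega)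
        simpa using this
      rw [h0, mul_one]
      have hj : ∀ j ∈ range m, ((2*(n+1-(j+1)) : ℕ) : ZMod p) = (-1) * ((2*j+1 : ℕ) : ZMod p) := by
        intro j hj; simp only [mem_range] at hj
        rw [key2 (2*(n+1-(j+1))) (2*j+1) (by omega)]; ring
      rw [Finset.prod_congr rfl hj, Finset.prod_mul_distrib, prod_const, card_range,
        Nat.cast_prod]
    linear_combination (((n-m).factorial : ℕ) : ZMod p) * hs
  -- r4
  have hr4 : (2:ZMod p) * (((n+1).factorial : ℕ) : ZMod p) = ((n.factorial : ℕ) : ZMod p) := by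
    have h1 : 2 * (n+1).factorial = (2*n+2) * n.factorial := by
      rw [Nat.factorial_succ]; ring
    calc (2:ZMod p) * (((n+1).factorial : ℕ) : ZMod p)
        = ((2 * (n+1).factorial : ℕ) : ZMod p) := by push_cast; ring
      _ = (((2*n+2) * n.factorial : ℕ) : ZMod p) := by rw [h1]
      _ = _ := by rw [Nat.cast_mul, key1 (2*n+2) 1 (by omega)]; simp
  -- r5
  have hr5 : (((2*(m+1)).factorial : ℕ) : ZMod p)
      = (2:ZMod p)^(m+1) * (((m+1).factorial : ℕ) : ZMod p) *
        ((∏ j ∈ range (m+1), (2*j+1) : ℕ) : ZMod p) := by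
    rw [two_mul_fact (m+1)]; push_cast; ring
  -- r6
  have hr6 : (2*((m:ZMod p)+1)) * (((2*(m+1)-1).factorial : ℕ) : ZMod p)
      = (((2*(m+1)).factorial : ℕ) : ZMod p) := by
    have h1 : (2*(m+1)) * ((2*(m+1)-1).factorial) = (2*(m+1)).factorial :=
      Nat.mul_factorial_pred (by omega)
    calc (2*((m:ZMod p)+1)) * (((2*(m+1)-1).factorial : ℕ) : ZMod p)
        = (((2*(m+1)) * ((2*(m+1)-1).factorial) : ℕ) : ZMod p) := by push_cast; ring
      _ = _ := by rw [h1]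
  -- r7
  have hr7 : ((∏ j ∈ range (m+1), (2*j+1) : ℕ) : ZMod p)
      = ((∏ j ∈ range m, (2*j+1) : ℕ) : ZMod p) * (2*((m:ZMod p)+1) - 1) := by
    rw [prod_range_succ]; push_cast; ring
  -- powers of two
  have h2n1 : (2:ZMod p)^(2*n) = 1 := by
    have := ZMod.pow_card_sub_one_eq_one (p := p) h2ne
    rwa [show p - 1 = 2*n from by omega] at this
  have hu : ((-1:ZMod p)^n)^2 = 1 := by
    rw [← pow_mul, mul_comm, pow_mul]; norm_num
  have hv : ((-1:ZMod p)^m)^2 = 1 := by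
    rw [← pow_mul, mul_comm, pow_mul]; norm_num
  have h4a : (4:ZMod p)^(3*n+2+(m+1)) = 16 * ((2:ZMod p)^(m+1))^2 := by
    rw [show (4:ZMod p) = 2^2 from by norm_num, ← pow_mul,
      show 2*(3*n+2+(m+1)) = 2*n*3 + (4 + (m+1)*2) from by ring,
      pow_add, pow_mul, h2n1, one_pow, one_mul, pow_add, pow_mul]
    norm_num
  have h4b : (4:ZMod p)^(2*(m+1)) = ((2:ZMod p)^(m+1))^4 := by
    rw [show (4:ZMod p) = 2^2 from by norm_num, ← pow_mul, ← pow_mul]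
    congr 1; ring
  have h4c : (4:ZMod p)^(m+1) = ((2:ZMod p)^(m+1))^2 := by
    rw [show (4:ZMod p) = 2^2 from by norm_num, ← pow_mul, ← pow_mul]
    congr 1; ring
  have hn22 : 2*((n:ZMod p))+2 = 1 := by
    have := key1 (2*n+2) 1 (by omega)
    push_cast at this
    linear_combination this
  have hP : ((∏ j ∈ Finset.range (2*(m+1)-1), (2*n+2+j) : ℕ) : ZMod p)
      = (((2*(m+1)-1).factorial : ℕ) : ZMod p) := by
    rw [show 2*(m+1)-1 = 2*m+1 from by omega, Nat.cast_prod,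
      ← prod_range_add_one (2*m+1), Nat.cast_prod]
    apply Finset.prod_congr rfl
    intro j hj
    exact key1 _ _ (by omega)
  have main := alg_key ((n.factorial : ℕ) : ZMod p) (((m+1).factorial : ℕ) : ZMod p)
    ((∏ j ∈ range (m+1), (2*j+1) : ℕ) : ZMod p) ((∏ j ∈ range m, (2*j+1) : ℕ) : ZMod p)
    (((n-m).factorial : ℕ) : ZMod p) (((n+(m+1)).factorial : ℕ) : ZMod p)
    (((n+1).factorial : ℕ) : ZMod p) (((2*(m+1)-1).factorial : ℕ) : ZMod p)
    (((2*(m+1)).factorial : ℕ) : ZMod p) ((2:ZMod p)^(m+1)) ((-1:ZMod p)^n) ((-1:ZMod p)^m)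
    (2*((m:ZMod p)+1))
    ha_ne (hOd_ne m (by omega)) hs_ne hkk_ne h2ne hu hv hr1 hr2 hr3 hr4 hr5 hr6 hr7
  push_cast
  push_cast at hP
  rw [hW, hP, h4a, h4b, h4c, hn22]
  linear_combination main

lemma poch_half (m : ℕ) : poch (1/2) m = ((2*m).factorial : ℚ) / (4^m * m.factorial) := by
  induction m with
  | zero => simp [poch]
  | succ m ih =>
      have hstep : poch (1/2) (m+1) = poch (1/2) m * (1/2 + m) := by
        rw [poch, poch, prod_range_succ]
      rw [hstep, ih]
      have h1 : 2*(m+1) = (2*m+1)+1 := by ring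
      rw [h1]
      simp only [Nat.factorial_succ]
      have h4 : (4:ℚ)^(m+1) = 4 * 4^m := by ring
      rw [h4]
      push_cast
      have hf : ((2*m).factorial : ℚ) ≠ 0 := by positivity
      have hm : (m.factorial : ℚ) ≠ 0 := by positivity
      field_simp
      ring

lemma ratCongr_of_div (p : ℕ) (hp : p.Prime) (m : ℕ) (A B : ℤ) (hB0 : B ≠ 0)
    (hBnd : ¬ (p:ℤ) ∣ B) (hA : (p:ℤ)^m ∣ A) (x y : ℚ) (hxy : x - y = (A:ℚ)/(B:ℚ)) :
    ratCongr p m x y := by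
  haveI : Fact p.Prime := ⟨hp⟩
  rcases eq_or_ne A 0 with h0 | h0
  · left
    have : x - y = 0 := by rw [hxy, h0]; simp
    linarith [sub_eq_zero.mp this]
  · right
    have hAq : (A:ℚ) ≠ 0 := by exact_mod_cast h0
    have hBq : (B:ℚ) ≠ 0 := by exact_mod_cast hB0
    rw [hxy, padicValRat.div hAq hBq, padicValRat.of_int, padicValRat.of_int,
      padicValInt.eq_zero_of_not_dvd hBnd]
    have h4 : (m:ℕ) ≤ padicValInt p A := by
      rcases (padicValInt_dvd_iff m A).mp hA with h|h
      · exact absurd h h0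
      · exact h
    omega

theorem stmt6 (p : ℕ) (hp : p.Prime) (hodd : Odd p) (k : ℕ)
    (hk1 : 1 ≤ k) (hk2 : k ≤ (p - 1) / 2) :
    ratCongr p 4
      ((-1 : ℚ) ^ ((p + 1) / 2 + k) *
        (2 * poch (1/2) ((p + 1) / 2) ^ 2 * poch (1/2) ((p - 1) / 2 + k)) /
        ((((p - 1) / 2).factorial : ℚ) ^ 2 * (((p + 1) / 2 - k).factorial : ℚ) *
          poch (1/2) k ^ 2))
      ((p : ℚ) ^ 3 * 4 ^ k / (2 * k * (2 * k - 1) * ((2 * k).choose k : ℚ))) := by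
  obtain ⟨n, hn⟩ := hodd
  have hpn : p = 2*n+1 := by omega
  subst hpn
  have hkn : k ≤ n := by omega
  have hn1 : 1 ≤ n := le_trans hk1 hkn
  obtain ⟨m, hm⟩ : ∃ m, k = m+1 := ⟨k-1, by omega⟩
  rw [show (2*n+1+1)/2 = n+1 from by omega, show (2*n+1-1)/2 = n from by omega]
  -- the integer data
  set N₀ : ℤ := (-1)^(n+1+k) * 2 * ((2*(n:ℤ)+2) * ((2*n).factorial : ℤ))^2 *
      (((2*n).factorial : ℤ) * ((∏ j ∈ Finset.range (2*k-1), (2*n+2+j) : ℕ) : ℤ)) *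
      4^(2*k) * ((k.factorial : ℤ))^2 with hN₀
  set Dr : ℤ := (2*(k:ℤ)) * (2*(k:ℤ)-1) * ((2*k).factorial : ℤ) with hDr
  set Nr : ℤ := 4^k * ((k.factorial : ℤ))^2 with hNr
  set D : ℤ := 4^(3*n+2+k) * (((n+1).factorial : ℤ))^2 * ((n+k).factorial : ℤ) *
      ((n.factorial : ℤ))^2 * ((n+1-k).factorial : ℤ) * (((2*k).factorial : ℤ))^2 with hD
  have hkQ : (1:ℚ) ≤ (k:ℚ) := by exact_mod_cast hk1
  have hDrpos : 0 < Dr := by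
    have h1 : (0:ℤ) < 2*(k:ℤ) - 1 := by omega
    have h2 : (0:ℤ) < 2*(k:ℤ) := by omega
    have h3 : (0:ℤ) < ((2*k).factorial : ℤ) := by exact_mod_cast (2*k).factorial_pos
    positivity
  have hDpos : 0 < D := by
    have f1 : (0:ℤ) < (((n+1).factorial : ℤ)) := by exact_mod_cast (n+1).factorial_pos
    have f2 : (0:ℤ) < (((n+k).factorial : ℤ)) := by exact_mod_cast (n+k).factorial_pos
    have f3 : (0:ℤ) < ((n.factorial : ℤ)) := by exact_mod_cast n.factorial_pos
    have f4 : (0:ℤ) < (((n+1-k).factorial : ℤ)) := by exact_mod_cast (n+1-k).factorial_pos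
    have f5 : (0:ℤ) < (((2*k).factorial : ℤ)) := by exact_mod_cast (2*k).factorial_pos
    positivity
  refine ratCongr_of_div _ hp 4 ((2*(n:ℤ)+1)^3 * (N₀ * Dr - Nr * D)) (D * Dr)
    (by positivity) ?_ ?_ _ _ ?_
  · -- ¬ p ∣ D * Dr
    haveI : Fact (2*n+1).Prime := ⟨hp⟩
    set q := 2*n+1 with hq
    have hcast : ¬ ((D * Dr : ℤ) : ZMod q) = 0 → ¬ (q:ℤ) ∣ D * Dr := by
      intro h hd; exact h ((ZMod.intCast_zmod_eq_zero_iff_dvd _ _).mpr hd)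
    apply hcast
    have hndvd : ∀ a : ℕ, 0 < a → a < q → ((a : ℕ) : ZMod q) ≠ 0 := by
      intro a h1 h2
      rw [Ne, ZMod.natCast_eq_zero_iff]
      intro h; exact absurd (Nat.le_of_dvd h1 h) (by omega)
    have hfne : ∀ a : ℕ, a < q → ((a.factorial : ℕ) : ZMod q) ≠ 0 := by
      intro a h2 h
      rw [ZMod.natCast_eq_zero_iff, hp.dvd_factorial] at h
      omega
    have h2ne : (2 : ZMod q) ≠ 0 := by
      have := hndvd 2 (by norm_num) (by omega)
      simpa using this
    have h4ne : (4 : ZMod q) ≠ 0 := by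
      have h44 : (4 : ZMod q) = 2^2 := by norm_num
      rw [h44]; exact pow_ne_zero _ h2ne
    have hkne : (2*(k : ZMod q)) ≠ 0 := by
      intro h
      apply hndvd (2*k) (by omega) (by omega)
      push_cast
      linear_combination h
    have hk1ne : (2*(k : ZMod q) - 1) ≠ 0 := by
      intro h
      apply hndvd (2*k-1) (by omega) (by omega)
      have : ((2*k-1 : ℕ) : ZMod q) + 1 = 2*(k : ZMod q) := by
        have h5 : (2*k-1) + 1 = 2*k := by omega
        calc ((2*k-1 : ℕ) : ZMod q) + 1 = (((2*k-1) + 1 : ℕ) : ZMod q) := by push_cast; ring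
          _ = _ := by rw [h5]; push_cast; ring
      linear_combination this + h
    rw [hD, hDr]
    push_cast
    apply mul_ne_zero
    apply mul_ne_zero
    apply mul_ne_zero
    apply mul_ne_zero
    apply mul_ne_zero
    apply mul_ne_zero
    · exact pow_ne_zero _ h4ne
    · exact pow_ne_zero _ (hfne (n+1) (by omega))
    · exact hfne (n+k) (by omega)
    · exact pow_ne_zero _ (hfne n (by omega))
    · exact hfne (n+1-k) (by omega)
    · exact pow_ne_zero _ (hfne (2*k) (by omega))
    apply mul_ne_zero
    apply mul_ne_zero
    · exact hkne
    · exact hk1ne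
    · exact hfne (2*k) (by omega)
  · -- p^4 ∣ A
    have hd := zmod_key (2*n+1) n k m hp rfl hm hkn
    have hcast : ((2*n+1 : ℕ) : ℤ) = 2*(n:ℤ)+1 := by push_cast; ring
    rw [hcast] at hd
    calc ((2*n+1 : ℕ) : ℤ)^4 = (2*(n:ℤ)+1)^3 * (2*(n:ℤ)+1) := by rw [hcast]; ring
    _ ∣ (2*(n:ℤ)+1)^3 * (N₀ * Dr - Nr * D) := mul_dvd_mul_left _ hd
  · -- x - y = A / B
    have hfq1 : ((2*(n+1)).factorial : ℚ)
        = (2*(n:ℚ)+2) * ((2*(n:ℚ)+1) * ((2*n).factorial : ℚ)) := by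
      have h1 : (2*(n+1)).factorial = (2*n+2) * ((2*n+1) * (2*n).factorial) := by
        rw [show 2*(n+1) = (2*n+1)+1 from by ring, Nat.factorial_succ,
          Nat.factorial_succ]
      rw [h1]; push_cast; ring
    have hfq2 : ((2*(n+k)).factorial : ℚ)
        = (2*(n:ℚ)+1) * (((2*n).factorial : ℚ) *
          ((∏ j ∈ Finset.range (2*k-1), (2*n+2+j) : ℕ) : ℚ)) := by
      have h1 : (2*(n+k)).factorial
          = (2*n+1).factorial * ∏ j ∈ Finset.range (2*k-1), (2*n+1+1+j) := by
        rw [show 2*(n+k) = (2*n+1) + (2*k-1) from by omega]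
        exact fact_add_prod (2*n+1) (2*k-1)
      rw [h1, show 2*n+1+1 = 2*n+2 from by omega, Nat.factorial_succ]
      push_cast; ring
    have hch : ((2*k).choose k : ℚ) = ((2*k).factorial : ℚ) / (k.factorial * k.factorial) := by
      rw [Nat.cast_choose ℚ (show k ≤ 2*k from by omega), show 2*k - k = k from by omega]
    rw [poch_half, poch_half, poch_half, hch]
    have hBQ : ((D * Dr : ℤ) : ℚ) ≠ 0 := by
      have : (0:ℤ) < D * Dr := by positivity
      positivity
    rw [eq_div_iff hBQ]
    rw [hfq1, hfq2, hD, hDr, hN₀, hNr]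
    have e1 : ((n+1).factorial : ℚ) ≠ 0 := by positivity
    have e2 : ((n+k).factorial : ℚ) ≠ 0 := by positivity
    have e3 : (n.factorial : ℚ) ≠ 0 := by positivity
    have e4 : ((n+1-k).factorial : ℚ) ≠ 0 := by positivity
    have e5 : ((2*k).factorial : ℚ) ≠ 0 := by positivity
    have e6 : (k.factorial : ℚ) ≠ 0 := by positivity
    have e7 : (4:ℚ)^(n+1) ≠ 0 := by positivity
    have e8 : (4:ℚ)^(n+k) ≠ 0 := by positivity
    have e9 : (4:ℚ)^k ≠ 0 := by positivity
    have e10 : (2*(k:ℚ)) ≠ 0 := by positivity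
    have e11 : (2*(k:ℚ) - 1) ≠ 0 := by
      have : (0:ℚ) < 2*(k:ℚ) - 1 := by linarith
      exact this.ne'
    push_cast
    field_simp
    ring
end

section
/- Let $p > 3$ be a prime. Then $\binom{p-1}{(p-1)/2} \equiv (-1)^{(p-1)/2} 4^{p-1} \pmod{p^3}$ (Morley's congruence). -/
open Finset

section MorleyAux
open Nat

lemma sum_sq_zmod {p : ℕ} [Fact p.Prime] (hp3 : 3 < p) : ∑ x : ZMod p, x^2 = 0 := by
  have hp : p.Prime := Fact.out
  have h2 : (2 : ZMod p) ≠ 0 := by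
    intro h
    rw [show ((2:ZMod p)) = ((2:ℕ):ZMod p) by norm_num,
      ZMod.natCast_eq_zero_iff] at h
    have := Nat.le_of_dvd (by norm_num) h
    omega
  have key : ∑ x : ZMod p, (2*x)^2 = ∑ x : ZMod p, x^2 :=
    Fintype.sum_equiv (Equiv.mulLeft₀ (2:ZMod p) h2) _ _ (fun x => by
      simp [Equiv.mulLeft₀])
  have h3 : (3 : ZMod p) ≠ 0 := by
    intro h
    rw [show ((3:ZMod p)) = ((3:ℕ):ZMod p) by norm_num,
      ZMod.natCast_eq_zero_iff] at h
    have := Nat.le_of_dvd (by norm_num) h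
    omega
  have h4 : (3 : ZMod p) * ∑ x : ZMod p, x^2 = 0 := by
    have e : ∑ x : ZMod p, (2*x)^2 = 4 * ∑ x : ZMod p, x^2 := by
      rw [Finset.mul_sum]; exact Finset.sum_congr rfl fun x _ => by ring
    rw [e] at key
    linear_combination key
  exact (mul_eq_zero.mp h4).resolve_left h3

lemma sum_inv_sq {p m : ℕ} [Fact p.Prime] (hp3 : 3 < p) (hmp : 2*m+1 = p) :
    ∑ k ∈ Icc 1 m, ((k : ZMod p)⁻¹)^2 = 0 := by
  have hp : p.Prime := Fact.out
  have hcast : ∀ k : ℕ, 1 ≤ k → k ≤ 2*m → ((k : ZMod p)) ≠ 0 := by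
    intro k h1 h2 h
    rw [ZMod.natCast_eq_zero_iff] at h
    have := Nat.le_of_dvd (by omega) h
    omega
  -- full sum over ZMod p
  have hfull : ∑ x : ZMod p, (x⁻¹)^2 = 0 := by
    have : ∑ x : ZMod p, (x⁻¹)^2 = ∑ x : ZMod p, x^2 :=
      Fintype.sum_equiv (Function.Involutive.toPerm _ (inv_involutive)) _ _ (fun x => by simp)
    rw [this]; exact sum_sq_zmod hp3
  -- sum over Icc 1 (2m) equals full sum
  have hIcc : ∑ k ∈ Icc 1 (2*m), ((k : ZMod p)⁻¹)^2 = ∑ x : ZMod p, (x⁻¹)^2 := by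
    have herase : ∑ x ∈ (Finset.univ : Finset (ZMod p)).erase 0, (x⁻¹)^2
        = ∑ x : ZMod p, (x⁻¹)^2 :=
      Finset.sum_erase (f := fun x : ZMod p => (x⁻¹)^2) _ (by simp)
    rw [← herase]
    apply Finset.sum_nbij' (fun k : ℕ => (k : ZMod p)) (fun x : ZMod p => x.val)
    · intro a ha
      simp only [Finset.mem_Icc] at ha
      simp [Finset.mem_erase, hcast a ha.1 ha.2]
    · intro x hx
      simp only [Finset.mem_erase, Finset.mem_univ, and_true] at hx
      simp only [Finset.mem_Icc]
      have h1 : x.val ≠ 0 := fun h => hx ((ZMod.val_eq_zero x).mp h)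
      have h2 : x.val < p := ZMod.val_lt x
      omega
    · intro a ha
      simp only [Finset.mem_Icc] at ha
      exact ZMod.val_cast_of_lt (by omega)
    · intro x hx
      exact ZMod.natCast_zmod_val x
    · intro a ha; rfl
  -- reflection: second half equals first half
  have hsplit : ∑ k ∈ Icc 1 (2*m), ((k : ZMod p)⁻¹)^2
      = ∑ k ∈ Icc 1 m, ((k : ZMod p)⁻¹)^2 + ∑ k ∈ Icc (m+1) (2*m), ((k : ZMod p)⁻¹)^2 := by
    rw [← Finset.sum_union (by
      rw [Finset.disjoint_left]; intro a ha hb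
      simp only [Finset.mem_Icc] at ha hb; omega)]
    congr 1
    ext a; simp only [Finset.mem_union, Finset.mem_Icc]; omega
  have hrefl : ∑ k ∈ Icc (m+1) (2*m), ((k : ZMod p)⁻¹)^2
      = ∑ k ∈ Icc 1 m, ((k : ZMod p)⁻¹)^2 := by
    apply Finset.sum_nbij' (fun k : ℕ => 2*m+1-k) (fun k : ℕ => 2*m+1-k)
    · intro a ha; simp only [Finset.mem_Icc] at ha ⊢; omega
    · intro a ha; simp only [Finset.mem_Icc] at ha ⊢; omega
    · intro a ha; simp only [Finset.mem_Icc] at ha; omega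
    · intro a ha; simp only [Finset.mem_Icc] at ha; omega
    · intro a ha
      simp only [Finset.mem_Icc] at ha
      have : ((2*m+1-a : ℕ) : ZMod p) = -(a : ZMod p) := by
        have h1 : ((2*m+1-a : ℕ) : ZMod p) = ((2*m+1 : ℕ) : ZMod p) - (a : ZMod p) := by
          rw [Nat.cast_sub (by omega)]
        rw [h1, hmp, ZMod.natCast_self]; ring
      rw [this]; simp
  have h2 : (2 : ZMod p) ≠ 0 := by
    intro h
    rw [show ((2:ZMod p)) = ((2:ℕ):ZMod p) by norm_num,
      ZMod.natCast_eq_zero_iff] at h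
    have := Nat.le_of_dvd (by norm_num) h
    omega
  have : (2 : ZMod p) * ∑ k ∈ Icc 1 m, ((k : ZMod p)⁻¹)^2 = 0 := by
    rw [hrefl] at hsplit
    rw [hIcc, hfull] at hsplit
    linear_combination -hsplit
  exact (mul_eq_zero.mp this).resolve_left h2

lemma prod_add_psq {p : ℕ} (s : Finset ℕ) (c d : ℕ → ZMod (p^3)) :
    ∏ k ∈ s, (c k + (p : ZMod (p^3))^2 * d k)
      = ∏ k ∈ s, c k
        + (p : ZMod (p^3))^2 * ∑ k ∈ s, (d k * ∏ j ∈ s.erase k, c j) := by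
  have hp4 : (p : ZMod (p^3))^2 * (p : ZMod (p^3))^2 = 0 := by
    have h3 : ((p : ZMod (p^3)))^3 = 0 := by
      rw [← Nat.cast_pow]; exact ZMod.natCast_self _
    calc (p : ZMod (p^3))^2 * (p : ZMod (p^3))^2 = (p:ZMod (p^3))^3 * (p:ZMod (p^3)) := by ring
    _ = 0 := by rw [h3, zero_mul]
  induction s using Finset.induction_on with
  | empty => simp
  | @insert a s ha ih =>
    rw [Finset.prod_insert ha, ih, Finset.prod_insert ha, Finset.sum_insert ha,
      Finset.erase_insert ha]
    have hrw : ∑ k ∈ s, d k * ∏ j ∈ (insert a s).erase k, c j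
        = c a * ∑ k ∈ s, d k * ∏ j ∈ s.erase k, c j := by
      rw [Finset.mul_sum]
      apply Finset.sum_congr rfl
      intro k hk
      have hka : a ≠ k := fun h => ha (h ▸ hk)
      rw [Finset.erase_insert_of_ne hka,
        Finset.prod_insert (fun h => ha (Finset.mem_of_mem_erase h))]
      ring
    rw [hrw]
    linear_combination (d a * ∑ k ∈ s, d k * ∏ j ∈ s.erase k, c j) * hp4

lemma psq_mul_eq_zero {p : ℕ} (hp : 0 < p) (x : ZMod (p^3))
    (hx : (ZMod.castHom (dvd_pow_self p (three_ne_zero)) (ZMod p)) x = 0) :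
    (p : ZMod (p^3))^2 * x = 0 := by
  haveI : NeZero (p^3) := ⟨pow_ne_zero _ hp.ne'⟩
  have hval : ((x.val : ℕ) : ZMod (p^3)) = x := ZMod.natCast_zmod_val x
  have h1 : ((x.val : ℕ) : ZMod p) = 0 := by
    rw [← hx, ← hval]; simp
  rw [ZMod.natCast_eq_zero_iff] at h1
  obtain ⟨c, hc⟩ := h1
  calc (p : ZMod (p^3))^2 * x = ((p^2 * x.val : ℕ) : ZMod (p^3)) := by
        conv_lhs => rw [← hval]
        push_cast; ring
  _ = 0 := by
        rw [ZMod.natCast_eq_zero_iff]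
        exact ⟨c, by rw [hc]; ring⟩

lemma prod_Icc_id_fact (n : ℕ) : (∏ k ∈ Icc 1 n, k) = n ! := by
  rw [← Finset.Ico_add_one_right_eq_Icc]
  exact Finset.prod_Ico_id_eq_factorial n

lemma odd_prod_fact (m : ℕ) : (∏ k ∈ Icc 1 m, (2*k-1)) * (2^m * m !) = (2*m)! := by
  induction m with
  | zero => simp
  | succ n ih =>
    rw [Finset.prod_Icc_succ_top (by omega : 1 ≤ n+1)]
    rw [show 2*(n+1)-1 = 2*n+1 from by omega, show 2*(n+1) = (2*n+1)+1 from by omega]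
    rw [Nat.factorial_succ ((2*n)+1), Nat.factorial_succ (2*n), Nat.factorial_succ n,
      pow_succ]
    rw [← ih]
    ring

lemma reflect_odd (m : ℕ) :
    ∏ k ∈ Icc 1 m, ((2*m+1 : ℤ) - 2*k) = ∏ k ∈ Icc 1 m, (2*(k:ℤ)-1) := by
  apply Finset.prod_nbij' (fun k : ℕ => m+1-k) (fun k : ℕ => m+1-k)
  · intro a ha; simp only [Finset.mem_Icc] at ha ⊢; omega
  · intro a ha; simp only [Finset.mem_Icc] at ha ⊢; omega
  · intro a ha; simp only [Finset.mem_Icc] at ha; omega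
  · intro a ha; simp only [Finset.mem_Icc] at ha; omega
  · intro a ha
    simp only [Finset.mem_Icc] at ha
    have : ((m+1-a : ℕ) : ℤ) = (m:ℤ)+1-a := by
      rw [Nat.cast_sub (by omega)]; push_cast; ring
    rw [this]; ring

lemma reflect_half (m : ℕ) :
    ∏ k ∈ Icc 1 m, ((2*m+1 : ℤ) - k) = ∏ k ∈ Icc (m+1) (2*m), (k:ℤ) := by
  apply Finset.prod_nbij' (fun k : ℕ => 2*m+1-k) (fun k : ℕ => 2*m+1-k)
  · intro a ha; simp only [Finset.mem_Icc] at ha ⊢; omega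
  · intro a ha; simp only [Finset.mem_Icc] at ha ⊢; omega
  · intro a ha; simp only [Finset.mem_Icc] at ha; omega
  · intro a ha; simp only [Finset.mem_Icc] at ha; omega
  · intro a ha
    simp only [Finset.mem_Icc] at ha
    rw [Nat.cast_sub (by omega)]; push_cast; ring

lemma upper_half_fact (m : ℕ) : (∏ k ∈ Icc (m+1) (2*m), k) * m ! = (2*m)! := by
  have h1 : (∏ k ∈ Icc 1 m, k) * (∏ k ∈ Icc (m+1) (2*m), k) = ∏ k ∈ Icc 1 (2*m), k := by
    rw [← Finset.prod_union (by
      rw [Finset.disjoint_left]; intro a ha hb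
      simp only [Finset.mem_Icc] at ha hb; omega)]
    apply Finset.prod_congr _ (fun _ _ => rfl)
    ext a; simp only [Finset.mem_union, Finset.mem_Icc]; omega
  rw [prod_Icc_id_fact] at h1
  rw [prod_Icc_id_fact] at h1
  rw [mul_comm]
  rw [← h1]

lemma sum_prod_erase_zero {p m : ℕ} [Fact p.Prime] (hp3 : 3 < p) (hmp : 2*m+1 = p) :
    ∑ k ∈ Icc 1 m, ∏ j ∈ (Icc 1 m).erase k, (4*(j:ZMod p)*(j:ZMod p)) = 0 := by
  have hp : p.Prime := Fact.out
  set c : ℕ → ZMod p := fun j => 4*(j:ZMod p)*(j:ZMod p) with hc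
  have hc0 : ∀ j ∈ Icc 1 m, c j ≠ 0 := by
    intro j hj
    simp only [Finset.mem_Icc] at hj
    have hj0 : (j:ZMod p) ≠ 0 := by
      intro h; rw [ZMod.natCast_eq_zero_iff] at h
      have := Nat.le_of_dvd (by omega) h; omega
    have h4 : (4:ZMod p) ≠ 0 := by
      intro h
      rw [show ((4:ZMod p)) = ((4:ℕ):ZMod p) by norm_num,
        ZMod.natCast_eq_zero_iff] at h
      have h1 := Nat.le_of_dvd (by norm_num) h
      have h2 : p = 4 := by omega
      rw [h2] at hp; norm_num at hp
    exact mul_ne_zero (mul_ne_zero h4 hj0) hj0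
  have key : ∀ k ∈ Icc 1 m, ∏ j ∈ (Icc 1 m).erase k, c j
      = (∏ j ∈ Icc 1 m, c j) * (c k)⁻¹ := by
    intro k hk
    rw [eq_mul_inv_iff_mul_eq₀ (hc0 k hk)]
    exact Finset.prod_erase_mul _ _ hk
  rw [Finset.sum_congr rfl key, ← Finset.mul_sum]
  have hrw : ∑ k ∈ Icc 1 m, (c k)⁻¹ = 4⁻¹ * ∑ k ∈ Icc 1 m, ((k:ZMod p)⁻¹)^2 := by
    rw [Finset.mul_sum]
    apply Finset.sum_congr rfl
    intro k hk
    rw [hc]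
    simp only [mul_inv]
    ring
  rw [hrw, sum_inv_sq hp3 hmp]
  ring

end MorleyAux

open Nat in
theorem stmt9 (p : ℕ) (hp : p.Prime) (hp3 : 3 < p) :
    (((p - 1).choose ((p - 1) / 2) : ℤ)) ≡
      (-1) ^ ((p - 1) / 2) * 4 ^ (p - 1) [ZMOD (p : ℤ) ^ 3] := by
  haveI := Fact.mk hp
  haveI : NeZero (p^3) := ⟨pow_ne_zero _ hp.pos.ne'⟩
  obtain ⟨m, hmp⟩ : ∃ m, 2*m+1 = p := by
    obtain ⟨t, ht⟩ := hp.odd_of_ne_two (by omega)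
    exact ⟨t, by omega⟩
  have hm1 : p - 1 = 2*m := by omega
  have hm2 : (2*m) / 2 = m := by omega
  rw [hm1, hm2]
  have hmod : ((p:ℤ)^3) = ((p^3 : ℕ) : ℤ) := by push_cast; ring
  rw [hmod, ← ZMod.intCast_eq_intCast_iff]
  push_cast
  set R := ZMod (p^3) with hR
  have hpZ : (p:ℤ) = 2*(m:ℤ)+1 := by rw [← hmp]; push_cast; ring
  -- ℤ-level identities
  have hcast_odd : ∏ k ∈ Icc 1 m, ((2*k-1 : ℕ) : ℤ) = ∏ k ∈ Icc 1 m, (2*(k:ℤ)-1) := by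
    apply Finset.prod_congr rfl
    intro k hk
    simp only [Finset.mem_Icc] at hk
    omega
  have zE1 : (∏ k ∈ Icc 1 m, (2*(k:ℤ) - p)) * (2^m * (m ! : ℤ))
      = (-1)^m * ((2*m)! : ℤ) := by
    have z1 : (∏ k ∈ Icc 1 m, (2*(k:ℤ) - p)) = (-1)^m * ∏ k ∈ Icc 1 m, (2*(k:ℤ)-1) := by
      rw [← reflect_odd m]
      calc ∏ k ∈ Icc 1 m, (2*(k:ℤ) - p)
          = ∏ k ∈ Icc 1 m, (-1 * ((2*(m:ℤ)+1) - 2*k)) := by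
            apply Finset.prod_congr rfl
            intro k hk
            rw [hpZ]; ring
      _ = (∏ _k ∈ Icc 1 m, (-1:ℤ)) * ∏ k ∈ Icc 1 m, ((2*(m:ℤ)+1) - 2*k) := by
            rw [← Finset.prod_mul_distrib]
      _ = (-1)^m * ∏ k ∈ Icc 1 m, (2*(m:ℤ)+1 - 2*k) := by
            rw [Finset.prod_const, Nat.card_Icc]; norm_num
    rw [z1]
    have hodd := odd_prod_fact m
    have hz : (((∏ k ∈ Icc 1 m, (2*k-1)) * (2^m * m !) : ℕ) : ℤ) = (((2*m)! : ℕ) : ℤ) := by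
      rw [hodd]
    push_cast at hz
    rw [hcast_odd] at hz
    linear_combination (-1:ℤ)^m * hz
  have zE3 : (∏ k ∈ Icc 1 m, ((k:ℤ) - p)) * (m ! : ℤ) = (-1)^m * ((2*m)! : ℤ) := by
    have z1 : (∏ k ∈ Icc 1 m, ((k:ℤ) - p)) = (-1)^m * ∏ k ∈ Icc (m+1) (2*m), (k:ℤ) := by
      rw [← reflect_half m]
      calc ∏ k ∈ Icc 1 m, ((k:ℤ) - p)
          = ∏ k ∈ Icc 1 m, (-1 * ((2*(m:ℤ)+1) - k)) := by
            apply Finset.prod_congr rfl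
            intro k hk
            rw [hpZ]; ring
      _ = (∏ _k ∈ Icc 1 m, (-1:ℤ)) * ∏ k ∈ Icc 1 m, ((2*(m:ℤ)+1) - k) := by
            rw [← Finset.prod_mul_distrib]
      _ = (-1)^m * ∏ k ∈ Icc 1 m, (2*(m:ℤ)+1 - k) := by
            rw [Finset.prod_const, Nat.card_Icc]; norm_num
    rw [z1]
    have hup := upper_half_fact m
    have hz : (((∏ k ∈ Icc (m+1) (2*m), k) * m ! : ℕ) : ℤ) = (((2*m)! : ℕ) : ℤ) := by
      rw [hup]
    push_cast at hz
    linear_combination (-1:ℤ)^m * hz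
  -- R-level equations
  set a : R := ((m ! : ℕ) : R) with ha
  set b : R := (2:R)^m with hb
  set G : R := (((2*m)! : ℕ) : R) with hG
  set ε : R := (-1:R)^m with hε'
  set C : R := (((2*m).choose m : ℕ) : R) with hC
  set Q : R := ∏ k ∈ Icc 1 m, (2*(k:R) - (p:R)) with hQ
  set W : R := ∏ k ∈ Icc 1 m, ((k:R) - (p:R)) with hW
  have E1 : Q * (b * a) = ε * G := by
    have h := congrArg (fun z : ℤ => (z : ZMod (p^3))) zE1
    push_cast at h
    rw [hQ, hb, ha, hε', hG]
    linear_combination h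
  have E3 : W * a = ε * G := by
    have h := congrArg (fun z : ℤ => (z : ZMod (p^3))) zE3
    push_cast at h
    rw [hW, ha, hε', hG]
    linear_combination h
  have E4 : C * a * a = G := by
    have hn : (2*m).choose m * m ! * m ! = (2*m)! := by
      have h := Nat.choose_mul_factorial_mul_factorial (by omega : m ≤ 2*m)
      rw [show 2*m - m = m from by omega] at h
      exact h
    rw [hC, ha, hG]
    have h := congrArg (fun z : ℕ => (z : ZMod (p^3))) hn
    push_cast at h
    linear_combination h
  have haprod : (∏ k ∈ Icc 1 m, (k:R)) = a := by
    rw [ha, ← prod_Icc_id_fact m]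
    push_cast
    exact (show ((∏ k ∈ Icc 1 m, k : ℕ) : ZMod (p^3)) = ∏ k ∈ Icc 1 m, (k : ZMod (p^3)) from Nat.cast_prod _ _).symm
  have hb2 : (4:R)^m = b^2 := by
    rw [hb, ← pow_mul, mul_comm m 2, pow_mul]; norm_num
  have E2 : Q^2 = b^2 * a * W := by
    have hsq : Q^2 = ∏ k ∈ Icc 1 m, (2*(k:R) - (p:R))^2 := by
      rw [hQ, Finset.prod_pow]
    have hfac : ∏ k ∈ Icc 1 m, (2*(k:R) - (p:R))^2
        = ∏ k ∈ Icc 1 m, ((4*(k:R)*((k:R) - (p:R))) + (p:R)^2 * 1) := by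
      apply Finset.prod_congr rfl; intro k hk; ring
    rw [hsq, hfac, prod_add_psq (p := p) (Icc 1 m) _ _]
    have hker : (p:R)^2 * (∑ k ∈ Icc 1 m, (1 * ∏ j ∈ (Icc 1 m).erase k,
        (4*(j:R)*((j:R) - (p:R))))) = 0 := by
      apply psq_mul_eq_zero hp.pos
      rw [map_sum]
      have hcong : ∀ k ∈ Icc 1 m, (ZMod.castHom (dvd_pow_self p three_ne_zero) (ZMod p))
          (1 * ∏ j ∈ (Icc 1 m).erase k, (4*(j:R)*((j:R) - (p:R))))
          = ∏ j ∈ (Icc 1 m).erase k, (4*(j:ZMod p)*(j:ZMod p)) := by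
        intro k hk
        rw [one_mul, map_prod]
        apply Finset.prod_congr rfl
        intro j hj
        rw [map_mul, map_mul, map_sub, map_ofNat, map_natCast, map_natCast,
          ZMod.natCast_self, sub_zero]
      rw [Finset.sum_congr rfl hcong]
      exact sum_prod_erase_zero hp3 hmp
    rw [hker, add_zero]
    rw [Finset.prod_mul_distrib, Finset.prod_mul_distrib, Finset.prod_const, Nat.card_Icc,
      show m+1-1 = m from rfl, haprod, hb2, ← hW]
  have heps : ε * ε = 1 := by
    rw [hε', ← pow_add]
    exact Even.neg_one_pow ⟨m, rfl⟩
  have hA : IsUnit a := by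
    rw [ha, ZMod.isUnit_iff_coprime]
    apply Nat.Coprime.pow_right
    rw [Nat.coprime_comm]
    exact (Nat.Prime.coprime_iff_not_dvd hp).mpr (by rw [Nat.Prime.dvd_factorial hp]; omega)
  have hGu : IsUnit G := by
    rw [hG, ZMod.isUnit_iff_coprime]
    apply Nat.Coprime.pow_right
    rw [Nat.coprime_comm]
    exact (Nat.Prime.coprime_iff_not_dvd hp).mpr (by rw [Nat.Prime.dvd_factorial hp]; omega)
  have final : C * (G * a^3) = (ε * b^4) * (G * a^3) := by
    linear_combination (G*a) * E4 - a*((Q*b*a + ε*G) * E1 + G^2 * heps - b^2*a^2 * E2)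
      + b^4*a^3 * E3
  have hCval : C = ε * b^4 := (hGu.mul (hA.pow 3)).mul_right_cancel final
  have hb4 : b^4 = (4:R)^(2*m) := by
    rw [hb, ← pow_mul, show (4:R) = 2^2 by norm_num, ← pow_mul]
    congr 1
    ring
  rw [hCval, hb4]
end

section
/- Let $p$ be an odd prime and let $0 \le k \le (p+1)/2$. Then $\prod_{j=1}^{k} \frac{(2j-3)^2 - p^2}{(2j)^2 - p^2} \equiv \frac{(-\frac{1}{2})_k^2}{k!^2}\left(1 + p^2 \sum_{j=1}^{k}\left(\frac{1}{(2j)^2} - \frac{1}{(2j-3)^2}\right)\right) \pmod{p^4}$, the congruence being between $p$-integral rationals. -/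
open Finset

section Aux

variable {p : ℕ} [hp : Fact p.Prime]

private lemma padicNorm_prod' {α : Type*} (s : Finset α) (f : α → ℚ) :
    padicNorm p (∏ i ∈ s, f i) = ∏ i ∈ s, padicNorm p (f i) := by
  classical
  induction s using Finset.induction with
  | empty => simp [padicNorm.one]
  | insert _ _ h ih => rw [prod_insert h, prod_insert h, padicNorm.mul, ih]

private lemma norm_sq' (x : ℚ) : padicNorm p (x^2) = (padicNorm p x)^2 := by
  rw [sq, padicNorm.mul, sq]

private lemma norm_p_sq' : padicNorm p ((p:ℚ)^2) = ((p:ℚ)^2)⁻¹ := by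
  rw [norm_sq', padicNorm.padicNorm_p_of_prime, inv_pow]

private lemma norm_one_sub' {x : ℚ} (hx : padicNorm p x = 1) :
    padicNorm p (1 - (p:ℚ)^2 * x) = 1 := by
  have hp1 : (1:ℚ) < p := by exact_mod_cast hp.out.one_lt
  have hd : ((p:ℚ)^2)⁻¹ < 1 := by
    rw [inv_lt_one_iff₀]; right; nlinarith
  have hnx : padicNorm p ((p:ℚ)^2 * x) = ((p:ℚ)^2)⁻¹ := by
    rw [padicNorm.mul, norm_p_sq', hx, mul_one]
  have h1 : padicNorm p (1:ℚ) = 1 := padicNorm.one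
  have := padicNorm.add_eq_max_of_ne (p := p) (q := (1:ℚ)) (r := -((p:ℚ)^2 * x))
    (by rw [padicNorm.neg, h1, hnx]; exact fun h => absurd h.symm (ne_of_lt hd))
  rw [← sub_eq_add_neg] at this
  rw [this, padicNorm.neg, h1, hnx, max_eq_left hd.le]

private lemma unit_2j' (hodd : Odd p) {j : ℕ} (h1 : 1 ≤ j) (h2 : j ≤ (p+1)/2) :
    padicNorm p (2*(j:ℚ)) = 1 := by
  have : (2*(j:ℚ)) = ((2*j : ℕ) : ℚ) := by push_cast; ring
  rw [this, padicNorm.nat_eq_one_iff]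
  intro hdvd
  rcases (Nat.Prime.dvd_mul hp.out).mp hdvd with h | h
  · have := Nat.le_of_dvd (by norm_num) h
    have h3 : 3 ≤ p := by rcases hodd with ⟨m, hm⟩; have := hp.out.two_le; omega
    omega
  · have := Nat.le_of_dvd (by omega) h
    have h3 : 3 ≤ p := by rcases hodd with ⟨m, hm⟩; have := hp.out.two_le; omega
    omega

private lemma unit_2j3' (hodd : Odd p) {j : ℕ} (h1 : 1 ≤ j) (h2 : j ≤ (p+1)/2) :
    padicNorm p (2*(j:ℚ) - 3) = 1 := by
  have : (2*(j:ℚ) - 3) = ((2*(j:ℤ) - 3 : ℤ) : ℚ) := by push_cast; ring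
  rw [this, padicNorm.int_eq_one_iff]
  intro hdvd
  have h3 : 3 ≤ p := by rcases hodd with ⟨m, hm⟩; have := hp.out.two_le; omega
  have habs : |2*(j:ℤ) - 3| < (p:ℤ) := by rw [abs_lt]; omega
  have := Int.eq_zero_of_abs_lt_dvd hdvd habs
  omega

private lemma ne_2j3' {j : ℕ} : (2*(j:ℚ) - 3) ≠ 0 := by
  intro h
  have h2 : ((2*(j:ℤ) - 3 : ℤ) : ℚ) = 0 := by push_cast; linarith
  have : (2*(j:ℤ) - 3) = 0 := by exact_mod_cast h2
  omega

private lemma norm_inv_sq' {x : ℚ} (hx : padicNorm p x = 1) : padicNorm p (1/x^2) = 1 := by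
  rw [padicNorm.div, norm_sq', hx, padicNorm.one]; norm_num

private lemma key' (hodd : Odd p) : ∀ k, k ≤ (p+1)/2 →
    padicNorm p
      ((∏ j ∈ Icc 1 k, (1 - (p:ℚ)^2 * (1/(2*(j:ℚ)-3)^2)) / (1 - (p:ℚ)^2 * (1/(2*(j:ℚ))^2)))
        - (1 + (p:ℚ)^2 * ∑ j ∈ Icc 1 k, (1/(2*(j:ℚ))^2 - 1/(2*(j:ℚ)-3)^2)))
      ≤ ((p:ℚ)^2)⁻¹^2 := by
  intro k
  induction k with
  | zero =>
    intro _
    rw [show Finset.Icc 1 0 = (∅ : Finset ℕ) by rfl]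
    simp [padicNorm.zero]
  | succ k ih =>
    intro hk
    have hk' : k ≤ (p+1)/2 := le_trans (Nat.le_succ k) hk
    have hP := ih hk'
    set a : ℚ := 1/(2*((k+1:ℕ):ℚ)-3)^2 with ha_def
    set b : ℚ := 1/(2*((k+1:ℕ):ℚ))^2 with hb_def
    set P : ℚ := ∏ j ∈ Icc 1 k, (1 - (p:ℚ)^2 * (1/(2*(j:ℚ)-3)^2)) / (1 - (p:ℚ)^2 * (1/(2*(j:ℚ))^2)) with hPdef
    set S : ℚ := ∑ j ∈ Icc 1 k, (1/(2*(j:ℚ))^2 - 1/(2*(j:ℚ)-3)^2) with hSdef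
    rw [Finset.prod_Icc_succ_top (Nat.le_add_left 1 k), Finset.sum_Icc_succ_top (Nat.le_add_left 1 k)]
    have hδ : (0:ℚ) < ((p:ℚ)^2)⁻¹ := by
      have : (0:ℚ) < p := by exact_mod_cast hp.out.pos
      positivity
    have hδ1 : ((p:ℚ)^2)⁻¹ ≤ 1 := by
      have : (1:ℚ) ≤ p := by exact_mod_cast hp.out.one_le
      rw [inv_le_one_iff₀]; right; nlinarith
    have hna : padicNorm p a = 1 := norm_inv_sq' (unit_2j3' hodd (by omega) hk)
    have hnb : padicNorm p b = 1 := norm_inv_sq' (unit_2j' hodd (by omega) hk)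
    have hnc : padicNorm p (b - a) ≤ 1 := by
      refine le_trans padicNorm.sub ?_
      rw [hna, hnb]; simp
    have h1b : padicNorm p (1 - (p:ℚ)^2 * b) = 1 := norm_one_sub' hnb
    have h1a : padicNorm p (1 - (p:ℚ)^2 * a) = 1 := norm_one_sub' hna
    have h1bne : (1 - (p:ℚ)^2 * b) ≠ 0 := by
      intro h0; rw [h0, padicNorm.zero] at h1b; norm_num at h1b
    have hg : padicNorm p ((1 - (p:ℚ)^2 * a) / (1 - (p:ℚ)^2 * b)) = 1 := by
      rw [padicNorm.div, h1a, h1b]; norm_num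
    have hS : padicNorm p S ≤ 1 := by
      rw [hSdef]
      refine padicNorm.sum_le' (fun j hj => ?_) zero_le_one
      rw [mem_Icc] at hj
      refine le_trans padicNorm.sub ?_
      rw [norm_inv_sq' (unit_2j' hodd hj.1 (le_trans hj.2 hk')),
        norm_inv_sq' (unit_2j3' hodd hj.1 (le_trans hj.2 hk'))]
      simp
    have hp2S : padicNorm p ((p:ℚ)^2 * S) ≤ ((p:ℚ)^2)⁻¹ := by
      rw [padicNorm.mul, norm_p_sq']
      calc ((p:ℚ)^2)⁻¹ * padicNorm p S ≤ ((p:ℚ)^2)⁻¹ * 1 := by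
            exact mul_le_mul_of_nonneg_left hS hδ.le
        _ = ((p:ℚ)^2)⁻¹ := mul_one _
    have hQ : padicNorm p (1 + (p:ℚ)^2 * S) ≤ 1 := by
      refine le_trans padicNorm.nonarchimedean (max_le ?_ (le_trans hp2S hδ1))
      rw [padicNorm.one]
    have hE : (1 - (p:ℚ)^2 * a) / (1 - (p:ℚ)^2 * b) - (1 + (p:ℚ)^2 * (b - a))
        = ((p:ℚ)^2)^2 * (b * (b - a)) / (1 - (p:ℚ)^2 * b) := by
      field_simp
      ring
    have hEnorm : padicNorm p ((1 - (p:ℚ)^2 * a) / (1 - (p:ℚ)^2 * b) - (1 + (p:ℚ)^2 * (b - a)))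
        ≤ ((p:ℚ)^2)⁻¹^2 := by
      rw [hE, padicNorm.div, padicNorm.mul, padicNorm.mul, norm_sq', norm_p_sq', hnb, h1b]
      rw [div_one, one_mul]
      calc ((p:ℚ)^2)⁻¹^2 * padicNorm p (b - a) ≤ ((p:ℚ)^2)⁻¹^2 * 1 :=
            mul_le_mul_of_nonneg_left hnc (by positivity)
        _ = _ := mul_one _
    have hdecomp : P * ((1 - (p:ℚ)^2 * a) / (1 - (p:ℚ)^2 * b))
        - (1 + (p:ℚ)^2 * (S + (b - a)))
        = (P - (1 + (p:ℚ)^2 * S)) * ((1 - (p:ℚ)^2 * a) / (1 - (p:ℚ)^2 * b))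
          + (1 + (p:ℚ)^2 * S) * ((1 - (p:ℚ)^2 * a) / (1 - (p:ℚ)^2 * b) - (1 + (p:ℚ)^2 * (b - a)))
          + ((p:ℚ)^2 * (b - a)) * ((p:ℚ)^2 * S) := by
      ring
    have goal1 : padicNorm p ((P - (1 + (p:ℚ)^2 * S)) * ((1 - (p:ℚ)^2 * a) / (1 - (p:ℚ)^2 * b)))
        ≤ ((p:ℚ)^2)⁻¹^2 := by
      rw [padicNorm.mul, hg, mul_one]; exact hP
    have goal2 : padicNorm p ((1 + (p:ℚ)^2 * S) *
        ((1 - (p:ℚ)^2 * a) / (1 - (p:ℚ)^2 * b) - (1 + (p:ℚ)^2 * (b - a)))) ≤ ((p:ℚ)^2)⁻¹^2 := by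
      rw [padicNorm.mul]
      calc padicNorm p (1 + (p:ℚ)^2 * S) * padicNorm p _
          ≤ 1 * (((p:ℚ)^2)⁻¹^2) := by
            exact mul_le_mul hQ hEnorm (padicNorm.nonneg _) zero_le_one
        _ = _ := one_mul _
    have goal3 : padicNorm p (((p:ℚ)^2 * (b - a)) * ((p:ℚ)^2 * S)) ≤ ((p:ℚ)^2)⁻¹^2 := by
      rw [padicNorm.mul]
      have h1 : padicNorm p ((p:ℚ)^2 * (b - a)) ≤ ((p:ℚ)^2)⁻¹ := by
        rw [padicNorm.mul, norm_p_sq']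
        calc ((p:ℚ)^2)⁻¹ * padicNorm p (b-a) ≤ ((p:ℚ)^2)⁻¹ * 1 :=
              mul_le_mul_of_nonneg_left hnc hδ.le
          _ = _ := mul_one _
      calc padicNorm p ((p:ℚ)^2 * (b-a)) * padicNorm p ((p:ℚ)^2 * S)
          ≤ ((p:ℚ)^2)⁻¹ * ((p:ℚ)^2)⁻¹ :=
            mul_le_mul h1 hp2S (padicNorm.nonneg _) hδ.le
        _ = ((p:ℚ)^2)⁻¹^2 := (sq _).symm
    rw [hdecomp]
    exact le_trans padicNorm.nonarchimedean (max_le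
      (le_trans padicNorm.nonarchimedean (max_le goal1 goal2)) goal3)

private lemma ratCongr_of_padicNorm' {x y : ℚ}
    (h : padicNorm p (x - y) ≤ ((p:ℚ)^2)⁻¹^2) : ratCongr p 4 x y := by
  rcases eq_or_ne x y with he | hne
  · exact Or.inl he
  · right
    have hxy : x - y ≠ 0 := sub_ne_zero.mpr hne
    have hp1 : (1:ℚ) < p := by exact_mod_cast hp.out.one_lt
    have heq : ((p:ℚ)^2)⁻¹^2 = (p:ℚ) ^ (-(4:ℤ)) := by
      rw [← inv_pow, ← pow_mul, zpow_neg]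
      norm_num
    rw [padicNorm.eq_zpow_of_nonzero hxy, heq, zpow_le_zpow_iff_right₀ hp1] at h
    have : (4:ℤ) ≤ padicValRat p (x - y) := by linarith
    exact_mod_cast this

private lemma poch_eq' (k : ℕ) :
    poch (-(1/2)) k / (k.factorial : ℚ) = ∏ j ∈ Icc 1 k, (2*(j:ℚ)-3)/(2*(j:ℚ)) := by
  induction k with
  | zero => simp [poch]
  | succ k ih =>
    rw [Finset.prod_Icc_succ_top (Nat.le_add_left 1 k), ← ih]
    rw [show poch (-(1/2)) (k+1) = poch (-(1/2)) k * (-(1/2) + k) by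
      rw [poch, poch, Finset.prod_range_succ]]
    rw [Nat.factorial_succ]
    have hk0 : (k.factorial : ℚ) ≠ 0 := Nat.cast_ne_zero.mpr k.factorial_ne_zero
    have hk1 : ((k:ℚ)+1) ≠ 0 := by positivity
    push_cast
    field_simp
    ring

end Aux

theorem stmt11 (p : ℕ) (hp : p.Prime) (hodd : Odd p) (k : ℕ) (hk : k ≤ (p + 1) / 2) :
    ratCongr p 4
      (∏ j ∈ Finset.Icc 1 k,
        ((2 * (j : ℚ) - 3) ^ 2 - p ^ 2) / ((2 * j) ^ 2 - p ^ 2))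
      (poch (-(1/2)) k ^ 2 / (k.factorial : ℚ) ^ 2 *
        (1 + (p : ℚ) ^ 2 * ∑ j ∈ Finset.Icc 1 k,
          (1 / (2 * (j : ℚ)) ^ 2 - 1 / (2 * (j : ℚ) - 3) ^ 2))) := by
  haveI : Fact p.Prime := ⟨hp⟩
  apply ratCongr_of_padicNorm'
  have hLHS : (∏ j ∈ Finset.Icc 1 k,
        ((2 * (j : ℚ) - 3) ^ 2 - p ^ 2) / ((2 * j) ^ 2 - p ^ 2))
      = (∏ j ∈ Icc 1 k, ((2*(j:ℚ)-3)/(2*(j:ℚ)))^2) *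
        ∏ j ∈ Icc 1 k, (1 - (p:ℚ)^2 * (1/(2*(j:ℚ)-3)^2)) / (1 - (p:ℚ)^2 * (1/(2*(j:ℚ))^2)) := by
    rw [← Finset.prod_mul_distrib]
    refine Finset.prod_congr rfl (fun j hj => ?_)
    rw [mem_Icc] at hj
    have hj0 : (0:ℚ) < j := by exact_mod_cast hj.1
    have h2j : (2*(j:ℚ)) ≠ 0 := by positivity
    have h2j3 : (2*(j:ℚ) - 3) ≠ 0 := ne_2j3'
    have hpar : 2*(j:ℚ) - p ≠ 0 := by
      intro h
      have h2 : ((2*j:ℕ):ℚ) = ((p:ℕ):ℚ) := by push_cast; linarith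
      have h3 : 2*j = p := Nat.cast_injective h2
      rcases hodd with ⟨m, hm⟩; omega
    have hpos : (2*(j:ℚ) + p) ≠ 0 := by
      have : (0:ℚ) ≤ p := by positivity
      positivity
    have hden : (2*(j:ℚ))^2 - (p:ℚ)^2 ≠ 0 := by
      have hfac : (2*(j:ℚ))^2 - (p:ℚ)^2 = (2*(j:ℚ) - p) * (2*(j:ℚ) + p) := by ring
      rw [hfac]
      exact mul_ne_zero hpar hpos
    have h1bne : (1 - (p:ℚ)^2 * (1/(2*(j:ℚ))^2)) ≠ 0 := by
      have hrw : 1 - (p:ℚ)^2 * (1/(2*(j:ℚ))^2) = ((2*(j:ℚ))^2 - (p:ℚ)^2)/(2*(j:ℚ))^2 := by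
        field_simp
      rw [hrw]
      exact div_ne_zero hden (pow_ne_zero 2 h2j)
    field_simp
  have hRHS : poch (-(1/2)) k ^ 2 / (k.factorial : ℚ) ^ 2
      = ∏ j ∈ Icc 1 k, ((2*(j:ℚ)-3)/(2*(j:ℚ)))^2 := by
    rw [← div_pow, poch_eq', ← Finset.prod_pow]
  rw [hLHS, hRHS, ← mul_sub, padicNorm.mul]
  have hC : padicNorm p (∏ j ∈ Icc 1 k, ((2*(j:ℚ)-3)/(2*(j:ℚ)))^2) = 1 := by
    rw [padicNorm_prod']
    refine Finset.prod_eq_one (fun j hj => ?_)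
    rw [mem_Icc] at hj
    rw [norm_sq', padicNorm.div, unit_2j3' hodd hj.1 (le_trans hj.2 hk),
      unit_2j' hodd hj.1 (le_trans hj.2 hk)]
    norm_num
  rw [hC, one_mul]
  exact key' hodd k hk
end
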